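/- Let f : X → ℝ̄. Then the iterated upper envelope satisfies (f^∪)^∪ = f^∪. -/

import Mathlib

open scoped Topology

section Defs

variable {X : Type*} [AddCommGroup X] [Module ℝ X] [TopologicalSpace X]

/-- `p ∈ ∂f(x)`: `f x` is finite and `f y ≥ f x + ⟨y - x, p⟩` for all `y`. -/
def IsSubgrad (f : X → EReal) (x : X) (p : X →L[ℝ] ℝ) : Prop :=
  f x ≠ ⊤ ∧ f x ≠ ⊥ ∧ ∀ y, f x + (p (y - x) : EReal) ≤ f y

/-- Graph of the convex subdifferential of `f`. -/
def graphSub (f : X → EReal) : Set (X × (X →L[ℝ] ℝ)) :=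
  {q | IsSubgrad f q.1 q.2}

/-- Domain `D(∂f)` of the subdifferential. -/
def subdiffDom (f : X → EReal) : Set X := {x | ∃ p, IsSubgrad f x p}

/-- Range `R(∂f)` of the subdifferential. -/
def subdiffRan (f : X → EReal) : Set (X →L[ℝ] ℝ) := {p | ∃ x, IsSubgrad f x p}

/-- Monotone subset of `X × X*`. -/
def MonotoneSet (S : Set (X × (X →L[ℝ] ℝ))) : Prop :=
  ∀ a ∈ S, ∀ b ∈ S, 0 ≤ a.2 (a.1 - b.1) - b.2 (a.1 - b.1)

/-- Maximal monotone subset of `X × X*` (maximal w.r.t. graph inclusion). -/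
def MaxMonotoneSet (S : Set (X × (X →L[ℝ] ℝ))) : Prop :=
  MonotoneSet S ∧ ∀ T, MonotoneSet T → S ⊆ T → T = S

/-- Proper function: never `−∞` and not identically `+∞`. -/
def ProperE {Y : Type*} (f : Y → EReal) : Prop :=
  (∃ x, f x ≠ ⊤) ∧ ∀ x, f x ≠ ⊥

/-- Convexity of an extended-real-valued function via its epigraph. -/
def ConvexEpi (f : X → EReal) : Prop :=
  Convex ℝ {q : X × ℝ | f q.1 ≤ (q.2 : EReal)}

/-- The lsc convex hull: the greatest lsc convex function majorized by `f`. -/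
noncomputable def lscConvHull (f : X → EReal) : X → EReal := fun x =>
  sSup {v | ∃ g : X → EReal, ConvexEpi g ∧ LowerSemicontinuous g ∧ g ≤ f ∧ v = g x}

/-- Convex conjugate w.r.t. the dual system `(X, X*)`. -/
noncomputable def conjE (f : X → EReal) (p : X →L[ℝ] ℝ) : EReal :=
  ⨆ x, ((p x : EReal) - f x)

/-- Biconjugate `f**`. -/
noncomputable def biconjE (f : X → EReal) (x : X) : EReal :=
  ⨆ p : X →L[ℝ] ℝ, ((p x : EReal) - conjE f p)

/-- Fitzpatrick function of `∂f`. -/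
noncomputable def fitzSub (f : X → EReal) (x : X) (p : X →L[ℝ] ℝ) : EReal :=
  ⨆ a, ⨆ s, ⨆ _ : IsSubgrad f a s, ((s (x - a) + p a : ℝ) : EReal)

/-- Upper envelope `f^∪(x) = sup{⟨x−a, a*⟩ + f(a) : (a,a*) ∈ Graph ∂f}`. -/
noncomputable def upperEnv (f : X → EReal) (x : X) : EReal :=
  ⨆ a, ⨆ s, ⨆ _ : IsSubgrad f a s, ((s (x - a) : EReal) + f a)

end Defs


section Aux

variable {X : Type*} [AddCommGroup X] [Module ℝ X] [TopologicalSpace X]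

lemma upperEnv_le_self (f : X → EReal) (x : X) : upperEnv f x ≤ f x := by
  refine iSup_le fun a => iSup_le fun s => iSup_le fun h => ?_
  calc ((s (x - a) : EReal)) + f a = f a + (s (x - a) : EReal) := add_comm _ _
    _ ≤ f x := h.2.2 x

lemma term_le_upperEnv (f : X → EReal) {a : X} {s : X →L[ℝ] ℝ}
    (h : IsSubgrad f a s) (x : X) : ((s (x - a) : EReal)) + f a ≤ upperEnv f x :=
  le_iSup_of_le a (le_iSup_of_le s (le_iSup_of_le h le_rfl))

lemma upperEnv_eq_of_subgrad (f : X → EReal) {a : X} {s : X →L[ℝ] ℝ}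
    (h : IsSubgrad f a s) : upperEnv f a = f a := by
  refine le_antisymm (upperEnv_le_self f a) ?_
  calc f a = ((s (a - a) : EReal)) + f a := by simp
    _ ≤ upperEnv f a := term_le_upperEnv f h a

lemma isSubgrad_upperEnv (f : X → EReal) {a : X} {s : X →L[ℝ] ℝ}
    (h : IsSubgrad f a s) : IsSubgrad (upperEnv f) a s := by
  have he := upperEnv_eq_of_subgrad f h
  refine ⟨he ▸ h.1, he ▸ h.2.1, fun y => ?_⟩
  rw [he]
  calc f a + ((s (y - a) : EReal)) = ((s (y - a) : EReal)) + f a := add_comm _ _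
    _ ≤ upperEnv f y := term_le_upperEnv f h y

end Aux

theorem upperEnv_idempotent {X : Type*} [AddCommGroup X] [Module ℝ X] [TopologicalSpace X]
    [IsTopologicalAddGroup X] [ContinuousSMul ℝ X] [LocallyConvexSpace ℝ X] [T2Space X]
    (f : X → EReal) :
    upperEnv (upperEnv f) = upperEnv f := by
  funext x
  refine le_antisymm (upperEnv_le_self _ x) ?_
  refine iSup_le fun a => iSup_le fun s => iSup_le fun h => ?_
  calc ((s (x - a) : EReal)) + f a
      = ((s (x - a) : EReal)) + upperEnv f a := by rw [upperEnv_eq_of_subgrad f h]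
    _ ≤ upperEnv (upperEnv f) x := term_le_upperEnv _ (isSubgrad_upperEnv f h) x
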